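/- arXiv:cs/0507063 — 2 statements merged into one kernel-verified Lean document; each statement's English description precedes it below -/
import Mathlib

section
/- The TF-1 update function mapping (a,b,c,d) to (a ⊕ s ⊕ 2c·(b∨C₁), b ⊕ (s∧a) ⊕ 2c·(d∨C₃), c ⊕ (s∧a∧b) ⊕ 2a·(d∨C₃), d ⊕ (s∧a∧b∧c) ⊕ 2a·(b∨C₁)), with s = (C + (a∧b∧c∧d)) ⊕ (a∧b∧c∧d) and all arithmetic modulo 2^w, is a T-function: if two input quadruples agree modulo 2^k componentwise (k ≤ w), then the output quadruples agree modulo 2^k componentwise. -/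
lemma modEq_iff_testBit (k x y : ℕ) :
    x ≡ y [MOD 2 ^ k] ↔ ∀ i < k, x.testBit i = y.testBit i := by
  unfold Nat.ModEq
  constructor
  · intro h i hi
    have := congrArg (fun n => Nat.testBit n i) h
    simpa [Nat.testBit_mod_two_pow, hi] using this
  · intro h
    apply Nat.eq_of_testBit_eq
    intro i
    simp only [Nat.testBit_mod_two_pow]
    by_cases hi : i < k <;> simp [hi]
    exact h i hi

lemma Nat.ModEq.and' {k x y x' y' : ℕ} (h1 : x ≡ x' [MOD 2 ^ k]) (h2 : y ≡ y' [MOD 2 ^ k]) :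
    x &&& y ≡ x' &&& y' [MOD 2 ^ k] := by
  rw [modEq_iff_testBit] at *
  intro i hi
  simp [Nat.testBit_and, h1 i hi, h2 i hi]

lemma Nat.ModEq.or' {k x y x' y' : ℕ} (h1 : x ≡ x' [MOD 2 ^ k]) (h2 : y ≡ y' [MOD 2 ^ k]) :
    x ||| y ≡ x' ||| y' [MOD 2 ^ k] := by
  rw [modEq_iff_testBit] at *
  intro i hi
  simp [Nat.testBit_or, h1 i hi, h2 i hi]

lemma Nat.ModEq.xor' {k x y x' y' : ℕ} (h1 : x ≡ x' [MOD 2 ^ k]) (h2 : y ≡ y' [MOD 2 ^ k]) :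
    x ^^^ y ≡ x' ^^^ y' [MOD 2 ^ k] := by
  rw [modEq_iff_testBit] at *
  intro i hi
  simp [Nat.testBit_xor, h1 i hi, h2 i hi]

lemma Nat.ModEq.modPow {k w x : ℕ} (hk : k ≤ w) : x % 2 ^ w ≡ x [MOD 2 ^ k] := by
  unfold Nat.ModEq
  exact Nat.mod_mod_of_dvd x (pow_dvd_pow 2 hk)

/-- The auxiliary word `s` in the TF-1 update function. -/
def sAux (w C a b c d : ℕ) : ℕ :=
  ((C + (a &&& b &&& c &&& d)) % 2 ^ w) ^^^ (a &&& b &&& c &&& d)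

/-- The TF-1 update function, all arithmetic modulo `2 ^ w`. -/
def tf1Update (w C C₁ C₃ : ℕ) (a b c d : ℕ) : ℕ × ℕ × ℕ × ℕ :=
  let s := sAux w C a b c d
  (a ^^^ s ^^^ (2 * c * (b ||| C₁)) % 2 ^ w,
   b ^^^ (s &&& a) ^^^ (2 * c * (d ||| C₃)) % 2 ^ w,
   c ^^^ (s &&& a &&& b) ^^^ (2 * a * (d ||| C₃)) % 2 ^ w,
   d ^^^ (s &&& a &&& b &&& c) ^^^ (2 * a * (b ||| C₁)) % 2 ^ w)

theorem tf1Update_tfun (w k C C₁ C₃ : ℕ) (hk : k ≤ w)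
    (hC : C < 2 ^ w) (hC₁ : C₁ < 2 ^ w) (hC₃ : C₃ < 2 ^ w)
    (a b c d a' b' c' d' : ℕ)
    (ha : a < 2 ^ w) (hb : b < 2 ^ w) (hc : c < 2 ^ w) (hd : d < 2 ^ w)
    (ha' : a' < 2 ^ w) (hb' : b' < 2 ^ w) (hc' : c' < 2 ^ w) (hd' : d' < 2 ^ w)
    (hae : a ≡ a' [MOD 2 ^ k]) (hbe : b ≡ b' [MOD 2 ^ k])
    (hce : c ≡ c' [MOD 2 ^ k]) (hde : d ≡ d' [MOD 2 ^ k]) :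
    (tf1Update w C C₁ C₃ a b c d).1 ≡ (tf1Update w C C₁ C₃ a' b' c' d').1 [MOD 2 ^ k] ∧
    (tf1Update w C C₁ C₃ a b c d).2.1 ≡ (tf1Update w C C₁ C₃ a' b' c' d').2.1 [MOD 2 ^ k] ∧
    (tf1Update w C C₁ C₃ a b c d).2.2.1 ≡ (tf1Update w C C₁ C₃ a' b' c' d').2.2.1 [MOD 2 ^ k] ∧
    (tf1Update w C C₁ C₃ a b c d).2.2.2 ≡ (tf1Update w C C₁ C₃ a' b' c' d').2.2.2 [MOD 2 ^ k] := by
  have key : ∀ x x' : ℕ, x ≡ x' [MOD 2 ^ k] → x % 2 ^ w ≡ x' % 2 ^ w [MOD 2 ^ k] :=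
    fun x x' h => (Nat.ModEq.modPow hk).trans (h.trans (Nat.ModEq.modPow hk).symm)
  have hm : a &&& b &&& c &&& d ≡ a' &&& b' &&& c' &&& d' [MOD 2 ^ k] :=
    ((hae.and' hbe).and' hce).and' hde
  have hs : sAux w C a b c d ≡ sAux w C a' b' c' d' [MOD 2 ^ k] := by
    unfold sAux
    exact (key _ _ (Nat.ModEq.refl C |>.add hm)).xor' hm
  refine ⟨?_, ?_, ?_, ?_⟩ <;> simp only [tf1Update]
  · exact (hae.xor' hs).xor' (key _ _ ((Nat.ModEq.refl 2 |>.mul hce).mul (hbe.or' (Nat.ModEq.refl C₁))))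
  · exact (hbe.xor' (hs.and' hae)).xor'
      (key _ _ ((Nat.ModEq.refl 2 |>.mul hce).mul (hde.or' (Nat.ModEq.refl C₃))))
  · exact (hce.xor' ((hs.and' hae).and' hbe)).xor'
      (key _ _ ((Nat.ModEq.refl 2 |>.mul hae).mul (hde.or' (Nat.ModEq.refl C₃))))
  · exact (hde.xor' (((hs.and' hae).and' hbe).and' hce)).xor'
      (key _ _ ((Nat.ModEq.refl 2 |>.mul hae).mul (hbe.or' (Nat.ModEq.refl C₁))))
end

section
/- Let w be even and let the TF-1 output be Out(A) = S(T₂(A)) · (F(A) ∨ 1) mod 2^w, where S is the half-swap and T₂, F map internal states to words below 2^w. If Out(A) ≡ 0 (mod 2^w), then T₂(A) = 0. -/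
/-- The half-swap function on `w`-bit words. -/
def S (w x : ℕ) : ℕ := (x / 2 ^ (w / 2) + x * 2 ^ (w / 2)) % 2 ^ w

lemma S_eq_zero_imp (w x : ℕ) (hweven : Even w) (hx : x < 2 ^ w)
    (hS : S w x = 0) : x = 0 := by
  obtain ⟨k, hk⟩ := hweven
  have hw2 : w / 2 = k := by omega
  have hw : w = 2 * k := by omega
  set a := x / 2 ^ k with ha
  set b := x % 2 ^ k with hb
  have hx' : x = 2 ^ k * a + b := (Nat.div_add_mod x (2 ^ k)).symm
  have hbk : b < 2 ^ k := Nat.mod_lt _ (by positivity)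
  have hak : a < 2 ^ k := by
    rw [ha]
    apply Nat.div_lt_of_lt_mul
    calc x < 2 ^ w := hx
    _ = 2 ^ k * 2 ^ k := by rw [hw]; ring
  unfold S at hS
  rw [hw2] at hS
  have h2w : (2:ℕ) ^ w = 2 ^ k * 2 ^ k := by rw [hw]; ring
  have hrw : x / 2 ^ k + x * 2 ^ k = a + b * 2 ^ k + a * (2 ^ k * 2 ^ k) := by
    rw [← ha]; nth_rewrite 1 [hx']; ring
  have hab : a + b * 2 ^ k < 2 ^ k * 2 ^ k := by nlinarith
  have heq : (x / 2 ^ k + x * 2 ^ k) % 2 ^ w = a + b * 2 ^ k := by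
    rw [hrw, h2w, Nat.add_mul_mod_self_right, Nat.mod_eq_of_lt hab]
  rw [heq] at hS
  have ha0 : a = 0 := (Nat.add_eq_zero.mp hS).1
  have hb0 : b = 0 := by
    have : b * 2 ^ k = 0 := (Nat.add_eq_zero.mp hS).2
    have h2 : (2:ℕ) ^ k ≠ 0 := by positivity
    exact (Nat.mul_eq_zero.mp this).elim id (fun h => absurd h h2)
  rw [hx', ha0, hb0]; ring

theorem tf1_output_zero {α : Type*} (w : ℕ) (hw : 0 < w) (hweven : Even w)
    (T₂ F : α → ℕ) (hT₂ : ∀ A, T₂ A < 2 ^ w) (hF : ∀ A, F A < 2 ^ w)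
    (A : α) (h : (S w (T₂ A) * (F A ||| 1)) % 2 ^ w = 0) :
    T₂ A = 0 := by
  have hodd : Odd (F A ||| 1) := by
    rw [Nat.odd_iff, ← Nat.and_one_is_mod]
    simp [Nat.and_comm, Nat.one_and_eq_mod_two, Nat.or_mod_two_eq_one]
  have hcop : Nat.Coprime (2 ^ w) (F A ||| 1) :=
    Nat.Coprime.pow_left _ ((Nat.coprime_two_left).mpr hodd)
  have hdvd : 2 ^ w ∣ S w (T₂ A) * (F A ||| 1) := Nat.dvd_of_mod_eq_zero h
  have hdvd' : 2 ^ w ∣ S w (T₂ A) := (Nat.Coprime.dvd_of_dvd_mul_right hcop) hdvd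
  have hSlt : S w (T₂ A) < 2 ^ w := Nat.mod_lt _ (by positivity)
  have hS0 : S w (T₂ A) = 0 := Nat.eq_zero_of_dvd_of_lt hdvd' hSlt
  exact S_eq_zero_imp w _ hweven (hT₂ A) hS0
end
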